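/- Let n ≥ 1 (an integer), κ₁ > 0, R̄ ∈ ℝ, λ > 0 and j ∈ (0,1), and define ϖ_n* = (2κ₁/j + nR̄ − √((2κ₁/j − nR̄)² + 8nκ₁λ))/(4κ₁). Then ϖ_n* < min(nR̄/(2κ₁), 1/j); in particular the optimal aggregate investment in the risky assets is strictly smaller than the no-jump value nR̄/(2κ₁). -/

import Mathlib

theorem stmt_9 (n : ℕ) (hn : 1 ≤ n) (κ₁ Rbar lam j : ℝ)
    (hκ₁ : 0 < κ₁) (hlam : 0 < lam) (hj₀ : 0 < j) (hj₁ : j < 1)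
    (ϖstar : ℝ)
    (hϖ : ϖstar = (2 * κ₁ / j + n * Rbar
      - Real.sqrt ((2 * κ₁ / j - n * Rbar) ^ 2 + 8 * n * κ₁ * lam)) / (4 * κ₁)) :
    ϖstar < min ((n : ℝ) * Rbar / (2 * κ₁)) (1 / j) := by
  have hn' : (0:ℝ) < n := by exact_mod_cast hn
  set a := 2 * κ₁ / j with ha
  set b := (n:ℝ) * Rbar with hb
  set s := Real.sqrt ((a - b) ^ 2 + 8 * n * κ₁ * lam) with hsdef
  have hc : (0:ℝ) < 8 * n * κ₁ * lam := by positivity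
  have hs : |a - b| < s := by
    rw [hsdef, ← Real.sqrt_sq_eq_abs]
    exact Real.sqrt_lt_sqrt (sq_nonneg _) (by linarith)
  have h1 : a - b < s := lt_of_le_of_lt (le_abs_self _) hs
  have h2 : b - a < s := by linarith [neg_abs_le (a - b), hs]
  have h4 : (0:ℝ) < 4 * κ₁ := by linarith
  have h2k : (0:ℝ) < 2 * κ₁ := by linarith
  have haj : a * j = 2 * κ₁ := by rw [ha]; exact div_mul_cancel₀ _ hj₀.ne'
  refine lt_min ?_ ?_
  · rw [hϖ, div_lt_div_iff₀ h4 h2k]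
    nlinarith [h1, hκ₁]
  · rw [hϖ, div_lt_div_iff₀ h4 hj₀]
    nlinarith [mul_lt_mul_of_pos_right (show a + b - s < 2 * a by linarith) hj₀, haj]
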